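/- Let Q ⊆ 2^ω be measurable, σ a string with μ_σ(Q) > ε for some ε > 0. Define Q^ε_σ = {X ∈ Q ∩ [σ] : ∀ n ≥ |σ|, μ_{X↾n}(Q) ≥ ε}. Then μ_σ(Q^ε_σ) > μ_σ(Q) − ε; in particular Q^ε_σ is nonempty. -/

import Mathlib

open MeasureTheory Filter
open scoped ENNReal

/-- The cylinder of infinite binary sequences extending the finite string `τ`. -/
def cyl (τ : List Bool) : Set (ℕ → Bool) := {X | ∀ i : Fin τ.length, X i = τ.get i}

/-- Relative measure `μ_τ(P) = μ(P ∩ [τ]) / μ([τ])`. -/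
noncomputable def relMeas (μ : Measure (ℕ → Bool)) (τ : List Bool)
    (P : Set (ℕ → Bool)) : ℝ≥0∞ := μ (P ∩ cyl τ) / μ (cyl τ)

/-- The length-`n` prefix of an infinite binary sequence. -/
def pre (X : ℕ → Bool) (n : ℕ) : List Bool := List.ofFn fun i : Fin n => X i

lemma pre_length (X : ℕ → Bool) (n : ℕ) : (pre X n).length = n := by simp [pre]

lemma mem_cyl_iff {X : ℕ → Bool} {τ : List Bool} : X ∈ cyl τ ↔ pre X τ.length = τ := by
  constructor
  · intro h
    apply List.ext_get (pre_length X τ.length)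
    intro i h1 h2
    rw [← h ⟨i, h2⟩]
    simp [pre]
  · intro h i
    calc X i = (pre X τ.length).get (Fin.cast (pre_length X τ.length).symm i) := by
          simp [pre]
          rfl
      _ = τ.get i := by
          simp only [List.get_eq_getElem]
          rw [List.getElem_of_eq h]
          simp

lemma mem_cyl_pre (X : ℕ → Bool) (n : ℕ) : X ∈ cyl (pre X n) := by
  rw [mem_cyl_iff, pre_length]

lemma pre_prefix {m n : ℕ} (h : m ≤ n) (X : ℕ → Bool) : pre X m <+: pre X n := by
  rw [List.prefix_iff_eq_take]
  apply List.ext_get (by simp [pre_length, h])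
  intro i h1 h2
  simp [pre]

lemma cyl_mono {τ τ' : List Bool} (h : τ <+: τ') : cyl τ' ⊆ cyl τ := by
  intro X hX i
  have hi : (i : ℕ) < τ'.length := lt_of_lt_of_le i.isLt h.length_le
  calc X i = τ'.get ⟨i, hi⟩ := hX ⟨i, hi⟩
    _ = τ.get i := by
        simp only [List.get_eq_getElem]
        exact (h.getElem i.isLt).symm

lemma prefix_of_mem_cyls {τ τ' : List Bool} {X : ℕ → Bool} (h : X ∈ cyl τ)
    (h' : X ∈ cyl τ') : τ <+: τ' ∨ τ' <+: τ := by
  rw [mem_cyl_iff] at h h'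
  rcases le_total τ.length τ'.length with hl | hl
  · left; rw [← h, ← h']; exact pre_prefix hl X
  · right; rw [← h, ← h']; exact pre_prefix hl X

lemma measurableSet_cyl (τ : List Bool) : MeasurableSet (cyl τ) := by
  have : cyl τ = ⋂ i : Fin τ.length, (fun X : ℕ → Bool => X i) ⁻¹' {τ.get i} := by
    ext X; simp [cyl, Set.mem_iInter]
  rw [this]
  exact MeasurableSet.iInter fun i =>
    (measurable_pi_apply (i : ℕ)) (measurableSet_singleton _)

lemma prefix_minimal {σ τ : List Bool} (P : List Bool → Prop) (hστ : σ <+: τ) (hP : P τ) :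
    ∃ ρ, ρ <+: τ ∧ σ <+: ρ ∧ P ρ ∧ ∀ ρ', ρ' <+: ρ → σ <+: ρ' → P ρ' → ρ' = ρ := by
  classical
  have hex : ∃ k, σ <+: τ.take k ∧ P (τ.take k) := ⟨τ.length, by simpa using ⟨hστ, hP⟩⟩
  set k := Nat.find hex with hk
  obtain ⟨h1, h2⟩ := Nat.find_spec hex
  refine ⟨τ.take k, List.take_prefix _ _, h1, h2, ?_⟩
  intro ρ' hρ' hσρ' hPρ'
  have hlen : ρ'.length ≤ (τ.take k).length := hρ'.length_le
  have hlen' : ρ'.length ≤ k := le_trans hlen (by simp)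
  have heq : ρ' = τ.take ρ'.length := by
    conv_lhs => rw [List.prefix_iff_eq_take.mp hρ']
    rw [List.take_take, min_eq_left hlen']
  by_contra hne
  have hlt : ρ'.length < k := by
    rcases lt_or_eq_of_le hlen with h | h
    · have : (τ.take k).length ≤ k := by simp
      omega
    · exact absurd (hρ'.eq_of_length h) hne
  exact Nat.find_min hex hlt ⟨heq ▸ hσρ', heq ▸ hPρ'⟩

theorem stmt3 (μ : Measure (ℕ → Bool))
    (hμ : ∀ τ : List Bool, μ (cyl τ) = (2 : ℝ≥0∞)⁻¹ ^ τ.length)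
    (Q : Set (ℕ → Bool)) (hQ : MeasurableSet Q) (σ : List Bool)
    (ε : ℝ≥0∞) (hε : 0 < ε) (hεQ : ε < relMeas μ σ Q) :
    relMeas μ σ Q - ε <
      relMeas μ σ {X ∈ Q ∩ cyl σ | ∀ n ≥ σ.length, ε ≤ relMeas μ (pre X n) Q} ∧
    {X ∈ Q ∩ cyl σ | ∀ n ≥ σ.length, ε ≤ relMeas μ (pre X n) Q}.Nonempty := by
  classical
  set S := {X ∈ Q ∩ cyl σ | ∀ n ≥ σ.length, ε ≤ relMeas μ (pre X n) Q} with hS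
  -- basic facts on cylinder measures
  have hcyl0 : ∀ τ : List Bool, μ (cyl τ) ≠ 0 := by
    intro τ; rw [hμ]
    exact pow_ne_zero _ (ENNReal.inv_ne_zero.mpr (by simp))
  have hcylt : ∀ τ : List Bool, μ (cyl τ) ≠ ∞ := by
    intro τ; rw [hμ]
    exact ENNReal.pow_ne_top (by simp)
  have hcyl_le_one : ∀ τ : List Bool, μ (cyl τ) ≤ 1 := by
    intro τ; rw [hμ]
    exact pow_le_one₀ zero_le (by simp [ENNReal.inv_le_one])
  have hrel_le_one : ∀ τ : List Bool, relMeas μ τ Q ≤ 1 := by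
    intro τ
    rw [relMeas, ENNReal.div_le_iff (hcyl0 τ) (hcylt τ), one_mul]
    exact measure_mono Set.inter_subset_right
  have hε1 : ε < 1 := lt_of_lt_of_le hεQ (hrel_le_one σ)
  have hεt : ε ≠ ∞ := (hε1.trans ENNReal.one_lt_top).ne
  -- the antichain of minimal bad strings
  set M : Set (List Bool) := {τ | σ <+: τ ∧ relMeas μ τ Q < ε ∧
      ∀ ρ, ρ <+: τ → σ <+: ρ → relMeas μ ρ Q < ε → ρ = τ} with hM
  have hMσ : ∀ τ ∈ M, σ <+: τ := fun τ hτ => hτ.1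
  have hdisj : M.PairwiseDisjoint cyl := by
    intro τ hτ τ' hτ' hne
    rw [Function.onFun, Set.disjoint_left]
    intro X hX hX'
    rcases prefix_of_mem_cyls hX hX' with h | h
    · exact hne (hτ'.2.2 τ h hτ.1 hτ.2.1)
    · exact hne ((hτ.2.2 τ' h hτ'.1 hτ'.2.1).symm)
  -- covering the complement of S
  have hcover : (Q ∩ cyl σ) \ S ⊆ ⋃ τ ∈ M, Q ∩ cyl τ := by
    intro X hX
    obtain ⟨hXQ, hXS⟩ := hX
    have : ¬ ∀ n ≥ σ.length, ε ≤ relMeas μ (pre X n) Q := fun h => hXS ⟨hXQ, h⟩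
    push_neg at this
    obtain ⟨n, hn, hbad⟩ := this
    have hσpre : σ <+: pre X n := by
      have := mem_cyl_iff.mp hXQ.2
      rw [← this]
      exact pre_prefix hn X
    obtain ⟨ρ, hρτ, hσρ, hPρ, hmin⟩ := prefix_minimal (fun ρ => relMeas μ ρ Q < ε) hσpre hbad
    refine Set.mem_biUnion (show ρ ∈ M from ⟨hσρ, hPρ, hmin⟩) ⟨hXQ.1, ?_⟩
    exact cyl_mono hρτ (mem_cyl_pre X n)
  -- sum of cylinder measures over M
  have hsum_cyl : ∑' τ : M, μ (cyl (τ : List Bool)) ≤ μ (cyl σ) := by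
    rw [← measure_biUnion M.to_countable hdisj (fun τ _ => measurableSet_cyl τ)]
    exact measure_mono (Set.iUnion₂_subset fun τ hτ => cyl_mono (hMσ τ hτ))
  have hsum_g : ∑' τ : M, ε * μ (cyl (τ : List Bool)) ≤ ε * μ (cyl σ) := by
    rw [ENNReal.tsum_mul_left]
    exact mul_le_mul_right hsum_cyl ε
  have hgt : ∑' τ : M, ε * μ (cyl (τ : List Bool)) ≠ ∞ :=
    (lt_of_le_of_lt hsum_g (by
      calc ε * μ (cyl σ) ≤ ε * 1 := mul_le_mul_right (hcyl_le_one σ) ε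
        _ = ε := mul_one ε
        _ < ∞ := hεt.lt_top)).ne
  -- the key strict bound on the sum
  have hkey : ∑' τ : M, μ (Q ∩ cyl (τ : List Bool)) < ε * μ (cyl σ) := by
    have hterm : ∀ τ : M, μ (Q ∩ cyl (τ : List Bool)) < ε * μ (cyl (τ : List Bool)) := by
      intro ⟨τ, hτ⟩
      have := hτ.2.1
      rwa [relMeas, ENNReal.div_lt_iff (Or.inl (hcyl0 τ)) (Or.inl (hcylt τ))] at this
    rcases M.eq_empty_or_nonempty with hMe | ⟨τ₀, hτ₀⟩
    · have : ∑' τ : M, μ (Q ∩ cyl (τ : List Bool)) = 0 := by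
        rw [hMe]; exact tsum_empty
      rw [this]
      exact ENNReal.mul_pos hε.ne' (hcyl0 σ)
    · set t₀ : M := ⟨τ₀, hτ₀⟩
      refine lt_of_lt_of_le ?_ hsum_g
      rw [ENNReal.tsum_eq_add_tsum_ite (f := fun τ : M => μ (Q ∩ cyl (τ : List Bool))) t₀,
        ENNReal.tsum_eq_add_tsum_ite (f := fun τ : M => ε * μ (cyl (τ : List Bool))) t₀]
      refine ENNReal.add_lt_add_of_lt_of_le ?_ (hterm t₀) (ENNReal.tsum_le_tsum fun τ => ?_)
      · refine ne_top_of_le_ne_top hgt (ENNReal.tsum_le_tsum fun τ => ?_)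
        by_cases h : τ = t₀
        · simp [h]
        · rw [if_neg h]
          exact (hterm τ).le
      · by_cases h : τ = t₀
        · simp [h]
        · simp only [if_neg h]
          exact (hterm τ).le
  -- combining
  have hmain : μ (Q ∩ cyl σ) < μ (S ∩ cyl σ) + ε * μ (cyl σ) := by
    have h1 : μ (Q ∩ cyl σ) ≤ μ (S ∩ cyl σ) + μ ((Q ∩ cyl σ) \ S) := by
      refine le_trans (measure_mono ?_) (measure_union_le _ _)
      intro X hX
      by_cases h : X ∈ S
      · exact Or.inl ⟨h, hX.2⟩
      · exact Or.inr ⟨hX, h⟩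
    have h2 : μ ((Q ∩ cyl σ) \ S) ≤ ∑' τ : M, μ (Q ∩ cyl (τ : List Bool)) :=
      le_trans (measure_mono hcover) (measure_biUnion_le μ M.to_countable _)
    calc μ (Q ∩ cyl σ) ≤ μ (S ∩ cyl σ) + μ ((Q ∩ cyl σ) \ S) := h1
      _ ≤ μ (S ∩ cyl σ) + ∑' τ : M, μ (Q ∩ cyl (τ : List Bool)) := add_le_add_right h2 _
      _ < μ (S ∩ cyl σ) + ε * μ (cyl σ) := by
          exact ENNReal.add_lt_add_of_le_of_lt
            (ne_top_of_le_ne_top (hcylt σ) (measure_mono Set.inter_subset_right))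
            le_rfl hkey
  have hdivlt : relMeas μ σ Q < relMeas μ σ S + ε := by
    rw [relMeas, relMeas, ENNReal.div_lt_iff (Or.inl (hcyl0 σ)) (Or.inl (hcylt σ)),
      add_mul, ENNReal.div_mul_cancel (hcyl0 σ) (hcylt σ)]
    exact hmain
  have hgoal1 : relMeas μ σ Q - ε < relMeas μ σ S := by
    rw [ENNReal.sub_lt_iff_lt_right hεt hεQ.le]
    exact hdivlt
  refine ⟨hgoal1, ?_⟩
  have hpos : 0 < relMeas μ σ S := lt_of_le_of_lt zero_le
    (lt_of_lt_of_le (tsub_pos_of_lt hεQ) hgoal1.le)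
  have hμS : μ (S ∩ cyl σ) ≠ 0 := by
    intro h
    rw [relMeas, h, ENNReal.zero_div] at hpos
    exact lt_irrefl _ hpos
  obtain ⟨X, hX⟩ := nonempty_of_measure_ne_zero hμS
  exact ⟨X, hX.1⟩
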